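/- Let c, d be positive integers, g = gcd(c,d), e = c/g, e' = d/g, P = e + e' − 1, and let (c_k,d_k)_{k ≥ 1} be the sequence determined by (c,d) via φ_{c,d}. Let c̃, d̃ be arbitrary integers and for k ≥ 2 define ν_k = c̃ + d̃ if c_k = d_k, ν_k = d̃ if c_k > d_k, and ν_k = c̃ if c_k < d_k. Then ∑_{k=2}^{P+1} ν_k = e·d̃ + e'·c̃. -/

import Mathlib

open MeasureTheory MvPolynomial

namespace IgusaTS

/-- One step of the map `φ_{c,d}`: `φ_{c,d}(s,t) = (c,d)` if `s = t`,
`(s-t, d)` if `s > t`, and `(c, t-s)` if `s < t`. -/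
def phiStep (c d : ℕ) : ℕ × ℕ → ℕ × ℕ := fun st =>
  if st.1 = st.2 then (c, d) else if st.2 < st.1 then (st.1 - st.2, d) else (c, st.2 - st.1)

/-- The sequence `(c_k, d_k)_{k ≥ 1}` determined by `(c,d)` via `φ_{c,d}`,
indexed so that `cdSeq c d k = (c_{k+1}, d_{k+1})`; in particular
`cdSeq c d 0 = (c₁, d₁) = (c, d)`. -/
def cdSeq (c d : ℕ) : ℕ → ℕ × ℕ
  | 0 => (c, d)
  | k + 1 => phiStep c d (cdSeq c d k)

/-- The state of the orbit corresponding to the residue `r` of `s - t` modulo `c + d`. -/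
def stateOf (c d r : ℕ) : ℕ × ℕ :=
  if r = 0 then (if d < c then (d, d) else (c, c))
  else if r < c then (if r + d ≤ c then (r + d, d) else (c, c - r))
  else if r ≤ 2 * c then (r - c, d)
  else (c, c + d + c - r)

lemma phiStep_eq {c d x y : ℕ} (h : x = y) : phiStep c d (x, y) = (c, d) := by
  simp [phiStep, h]

lemma phiStep_gt {c d x y : ℕ} (h : y < x) : phiStep c d (x, y) = (x - y, d) := by
  simp only [phiStep]
  rw [if_neg (by omega), if_pos h]

lemma phiStep_lt {c d x y : ℕ} (h : x < y) : phiStep c d (x, y) = (c, y - x) := by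
  simp only [phiStep]
  rw [if_neg (by omega), if_neg (by omega)]

lemma stateOf_zero_lt {c d r : ℕ} (h : r = 0) (h2 : d < c) : stateOf c d r = (d, d) := by
  simp [stateOf, h, h2]

lemma stateOf_zero_ge {c d r : ℕ} (h : r = 0) (h2 : ¬ d < c) : stateOf c d r = (c, c) := by
  simp [stateOf, h, h2]

lemma stateOf_lo {c d r : ℕ} (h1 : r ≠ 0) (h2 : r < c) (h3 : r + d ≤ c) :
    stateOf c d r = (r + d, d) := by
  simp only [stateOf]
  rw [if_neg h1, if_pos h2, if_pos h3]

lemma stateOf_lo2 {c d r : ℕ} (h1 : r ≠ 0) (h2 : r < c) (h3 : c < r + d) :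
    stateOf c d r = (c, c - r) := by
  simp only [stateOf]
  rw [if_neg h1, if_pos h2, if_neg (by omega)]

lemma stateOf_mid {c d r : ℕ} (h1 : r ≠ 0) (h2 : c ≤ r) (h3 : r ≤ 2 * c) :
    stateOf c d r = (r - c, d) := by
  simp only [stateOf]
  rw [if_neg h1, if_neg (by omega), if_pos h3]

lemma stateOf_hi {c d r : ℕ} (h1 : r ≠ 0) (h2 : c ≤ r) (h3 : 2 * c < r) :
    stateOf c d r = (c, c + d + c - r) := by
  simp only [stateOf]
  rw [if_neg h1, if_neg (by omega), if_neg (by omega)]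

lemma step_stateOf (c d : ℕ) (hc : 0 < c) (hd : 0 < d) (r : ℕ)
    (h1 : 1 ≤ r) (h2 : r < c + d) (h3 : r ≠ c) :
    phiStep c d (stateOf c d r) = stateOf c d ((r + c) % (c + d)) := by
  have hmod : (r + c) % (c + d) = if r < d then r + c else r + c - (c + d) := by
    split_ifs with h
    · exact Nat.mod_eq_of_lt (by omega)
    · rw [Nat.mod_eq_sub_mod (by omega)]
      exact Nat.mod_eq_of_lt (by omega)
  rw [hmod]
  rcases lt_or_gt_of_ne h3 with hrc | hrc
  · -- r < c : phiStep (stateOf r) = (r, d)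
    have hphi : phiStep c d (stateOf c d r) = (r, d) := by
      by_cases h : r + d ≤ c
      · rw [stateOf_lo (c := c) (d := d) (r := r) (by omega) hrc h,
          phiStep_gt (c := c) (d := d) (x := r + d) (y := d) (by omega)]
        simp only [Prod.mk.injEq, and_true, true_and]; omega
      · rw [stateOf_lo2 (c := c) (d := d) (r := r) (by omega) hrc (by omega),
          phiStep_gt (c := c) (d := d) (x := c) (y := c - r) (by omega)]
        simp only [Prod.mk.injEq, and_true, true_and]; omega
    rw [hphi]
    rcases lt_trichotomy r d with h | h | h
    · rw [if_pos h, stateOf_mid (c := c) (d := d) (r := r + c) (by omega) (by omega) (by omega)]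
      simp only [Prod.mk.injEq, and_true, true_and]; omega
    · rw [if_neg (by omega),
        stateOf_zero_lt (c := c) (d := d) (r := r + c - (c + d)) (by omega) (by omega)]
      simp only [Prod.mk.injEq, and_true, true_and]; omega
    · rw [if_neg (by omega),
        stateOf_lo (c := c) (d := d) (r := r + c - (c + d)) (by omega) (by omega) (by omega)]
      simp only [Prod.mk.injEq, and_true, true_and]; omega
  · -- c < r : phiStep (stateOf r) = (c, c + d - r)
    have hphi : phiStep c d (stateOf c d r) = (c, c + d - r) := by
      by_cases h : r ≤ 2 * c
      · rw [stateOf_mid (c := c) (d := d) (r := r) (by omega) (by omega) h,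
          phiStep_lt (c := c) (d := d) (x := r - c) (y := d) (by omega)]
        simp only [Prod.mk.injEq, and_true, true_and]; omega
      · rw [stateOf_hi (c := c) (d := d) (r := r) (by omega) (by omega) (by omega),
          phiStep_lt (c := c) (d := d) (x := c) (y := c + d + c - r) (by omega)]
        simp only [Prod.mk.injEq, and_true, true_and]; omega
    rw [hphi]
    rcases lt_trichotomy r d with h | h | h
    · rw [if_pos h, stateOf_hi (c := c) (d := d) (r := r + c) (by omega) (by omega) (by omega)]
      simp only [Prod.mk.injEq, and_true, true_and]; omega
    · rw [if_neg (by omega),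
        stateOf_zero_ge (c := c) (d := d) (r := r + c - (c + d)) (by omega) (by omega)]
      simp only [Prod.mk.injEq, and_true, true_and]; omega
    · rw [if_neg (by omega),
        stateOf_lo2 (c := c) (d := d) (r := r + c - (c + d)) (by omega) (by omega) (by omega)]
      simp only [Prod.mk.injEq, and_true, true_and]; omega

lemma coprime_sum (c d : ℕ) (hc : 0 < c) (hd : 0 < d) (hcop : Nat.Coprime c d) :
    Nat.Coprime c (c + d) := by
  rw [Nat.add_comm]
  exact Nat.coprime_add_self_right.mpr hcop

lemma cdSeq_eq_stateOf (c d : ℕ) (hc : 0 < c) (hd : 0 < d) (hcop : Nat.Coprime c d) :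
    ∀ j, j + 2 ≤ c + d → cdSeq c d j = stateOf c d ((j + 2) * c % (c + d)) := by
  intro j
  induction j with
  | zero =>
    intro _
    have h2 : (0 + 2) * c = 2 * c := by ring
    rw [h2]
    rcases lt_trichotomy c d with h | h | h
    · -- c < d : 2c % (c+d) = 2c
      have hm : 2 * c % (c + d) = 2 * c := Nat.mod_eq_of_lt (by omega)
      rw [hm, stateOf_mid (c := c) (d := d) (r := 2 * c) (by omega) (by omega) (by omega)]
      show cdSeq c d 0 = _
      simp only [cdSeq, Prod.mk.injEq, and_true, true_and]
      omega
    · -- c = d : coprime forces c = d = 1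
      have hc1 : c = 1 := by
        have := hcop
        rw [Nat.Coprime, h, Nat.gcd_self] at this
        omega
      subst h
      have hm : 2 * c % (c + c) = 0 := by
        rw [show c + c = 2 * c by ring]
        exact Nat.mod_self _
      rw [hm, stateOf_zero_ge (c := c) (d := c) rfl (by omega)]
      show cdSeq c c 0 = _
      simp only [cdSeq]
    · -- d < c : 2c % (c+d) = c - d
      have hm : 2 * c % (c + d) = c - d := by
        rw [Nat.mod_eq_sub_mod (by omega)]
        rw [Nat.mod_eq_of_lt (by omega)]
        omega
      rw [hm, stateOf_lo (c := c) (d := d) (r := c - d) (by omega) (by omega) (by omega)]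
      show cdSeq c d 0 = _
      simp only [cdSeq, Prod.mk.injEq, and_true, true_and]
      omega
  | succ k ih =>
    intro hk
    have hcop' : Nat.Coprime c (c + d) := coprime_sum c d hc hd hcop
    have ihh := ih (by omega)
    set n := c + d with hn
    have hn2 : 2 ≤ n := by omega
    have hr1 : (k + 2) * c % n ≠ 0 := by
      intro h0
      have hdvd : n ∣ (k + 2) * c := Nat.dvd_of_mod_eq_zero h0
      have : n ∣ (k + 2) := (Nat.Coprime.dvd_of_dvd_mul_right
        (Nat.Coprime.symm hcop') hdvd)
      have := Nat.le_of_dvd (by omega) this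
      omega
    have hr2 : (k + 2) * c % n < n := Nat.mod_lt _ (by omega)
    have hr3 : (k + 2) * c % n ≠ c := by
      intro h0
      have hcn : c % n = c := Nat.mod_eq_of_lt (by omega)
      have : (k + 2) * c ≡ 1 * c [MOD n] := by
        show (k + 2) * c % n = 1 * c % n
        rw [one_mul, hcn, h0]
      have h1 : (k + 2) ≡ 1 [MOD n] := Nat.ModEq.cancel_right_of_coprime hcop'.symm this
      have h2 : (k + 2) % n = 1 % n := h1
      rw [Nat.mod_eq_of_lt (by omega), Nat.mod_eq_of_lt (by omega)] at h2
      omega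
    show phiStep c d (cdSeq c d k) = _
    rw [ihh, step_stateOf c d hc hd _ (by omega) hr2 hr3]
    congr 1
    rw [Nat.mod_add_mod]
    congr 1
    ring

lemma nu_stateOf (c d : ℕ) (hc : 0 < c) (hd : 0 < d) (ct dt : ℤ) (r : ℕ)
    (hr : r < c + d) (hne : r ≠ c) :
    (if (stateOf c d r).1 = (stateOf c d r).2 then ct + dt
      else if (stateOf c d r).2 < (stateOf c d r).1 then dt else ct)
    = (if r = 0 then ct + dt else if r ≤ c then dt else ct) := by
  by_cases h0 : r = 0
  · by_cases hdc : d < c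
    · rw [stateOf_zero_lt h0 hdc]; simp [h0]
    · rw [stateOf_zero_ge h0 hdc]; simp [h0]
  · rcases lt_or_gt_of_ne hne with hrc | hrc
    · -- r < c : a ">" state, value dt
      by_cases h : r + d ≤ c
      · rw [stateOf_lo h0 hrc h]
        simp only [Prod.fst, Prod.snd]
        rw [if_neg (by omega), if_pos (by omega), if_neg h0, if_pos (by omega)]
      · rw [stateOf_lo2 h0 hrc (by omega)]
        simp only [Prod.fst, Prod.snd]
        rw [if_neg (by omega), if_pos (by omega), if_neg h0, if_pos (by omega)]
    · -- c < r : a "<" state, value ct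
      by_cases h : r ≤ 2 * c
      · rw [stateOf_mid h0 (by omega) h]
        simp only [Prod.fst, Prod.snd]
        rw [if_neg (by omega), if_neg (by omega), if_neg h0, if_neg (by omega)]
      · rw [stateOf_hi h0 (by omega) (by omega)]
        simp only [Prod.fst, Prod.snd]
        rw [if_neg (by omega), if_neg (by omega), if_neg h0, if_neg (by omega)]

/-- The summand `ν` as a function of the state. -/
def nuP (ct dt : ℤ) (p : ℕ × ℕ) : ℤ :=
  if p.1 = p.2 then ct + dt else if p.2 < p.1 then dt else ct

/-- The summand `ν` as a function of the residue. -/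
def nuR (c : ℕ) (ct dt : ℤ) (r : ℕ) : ℤ :=
  if r = 0 then ct + dt else if r ≤ c then dt else ct

lemma nuP_stateOf (c d : ℕ) (hc : 0 < c) (hd : 0 < d) (ct dt : ℤ) (r : ℕ)
    (hr : r < c + d) (hne : r ≠ c) :
    nuP ct dt (stateOf c d r) = nuR c ct dt r :=
  nu_stateOf c d hc hd ct dt r hr hne

lemma core (c d : ℕ) (hc : 0 < c) (hd : 0 < d) (hcop : Nat.Coprime c d) (ct dt : ℤ) :
    ∑ k ∈ Finset.range (c + d - 1), nuP ct dt (cdSeq c d (k + 1))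
      = (c : ℤ) * dt + (d : ℤ) * ct := by
  have hcop' : Nat.Coprime c (c + d) := coprime_sum c d hc hd hcop
  set n := c + d with hn
  have hn2 : 2 ≤ n := by omega
  -- residues of the form m*c with 2 ≤ m ≤ n are never ≡ c
  have hr_ne : ∀ m : ℕ, 2 ≤ m → m ≤ n → m * c % n ≠ c := by
    intro m hm2 hmn h0
    have hcn : c % n = c := Nat.mod_eq_of_lt (by omega)
    have hme : m * c ≡ 1 * c [MOD n] := by
      show m * c % n = 1 * c % n
      rw [one_mul, hcn, h0]
    have h1 : m ≡ 1 [MOD n] := Nat.ModEq.cancel_right_of_coprime hcop'.symm hme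
    have h2 : m % n = 1 % n := h1
    have e1 : (1 : ℕ) % n = 1 := Nat.mod_eq_of_lt (by omega)
    by_cases hmn' : m < n
    · rw [Nat.mod_eq_of_lt hmn', e1] at h2; omega
    · have hmn'' : m = n := by omega
      rw [hmn'', Nat.mod_self, e1] at h2; omega
  set H : ℕ → ℤ := fun j => nuR c ct dt ((j + 2) * c % n) with hH
  -- the generic terms
  have hterm1 : ∀ k, k + 3 ≤ n → nuP ct dt (cdSeq c d (k + 1)) = H (k + 1) := by
    intro k hk
    rw [cdSeq_eq_stateOf c d hc hd hcop (k + 1) (by omega)]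
    exact nuP_stateOf c d hc hd ct dt _ (Nat.mod_lt _ (by omega))
      (hr_ne (k + 1 + 2) (by omega) (by omega))
  -- the last term
  have hbase : (c, d) = stateOf c d ((0 + 2) * c % n) := by
    have h0 := cdSeq_eq_stateOf c d hc hd hcop 0 (by omega)
    rwa [show cdSeq c d 0 = (c, d) from rfl] at h0
  have hlast : nuP ct dt (cdSeq c d (n - 1)) = H 0 := by
    have h1 : cdSeq c d (n - 2) = stateOf c d ((n - 2 + 2) * c % n) :=
      cdSeq_eq_stateOf c d hc hd hcop (n - 2) (by omega)
    have he0 : (n - 2 + 2) * c % n = 0 := by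
      rw [show n - 2 + 2 = n by omega]
      exact Nat.mul_mod_right n c
    have h2 : cdSeq c d (n - 1) = (c, d) := by
      rw [show n - 1 = (n - 2) + 1 by omega]
      show phiStep c d (cdSeq c d (n - 2)) = _
      rw [h1, he0]
      by_cases hdc : d < c
      · rw [stateOf_zero_lt rfl hdc]; exact phiStep_eq rfl
      · rw [stateOf_zero_ge rfl hdc]; exact phiStep_eq rfl
    rw [h2, hbase]
    exact nuP_stateOf c d hc hd ct dt _ (Nat.mod_lt _ (by omega))
      (hr_ne (0 + 2) (by omega) (by omega))
  -- assemble the sum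
  obtain ⟨m, hm⟩ : ∃ m, n - 1 = m + 1 := ⟨n - 2, by omega⟩
  have hS : ∑ k ∈ Finset.range (n - 1), nuP ct dt (cdSeq c d (k + 1))
      = ∑ j ∈ Finset.range (m + 1), H j := by
    rw [hm, Finset.sum_range_succ, Finset.sum_range_succ']
    congr 1
    · exact Finset.sum_congr rfl fun k hk =>
        hterm1 k (by have := Finset.mem_range.mp hk; omega)
    · rw [show m + 1 = n - 1 by omega]
      exact hlast
  have hHm1 : H (m + 1) = dt := by
    have hc' : (m + 1 + 2) * c % n = c := by
      rw [show m + 1 + 2 = n + 1 by omega, show (n + 1) * c = c + n * c by ring,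
        Nat.add_mul_mod_self_left]
      exact Nat.mod_eq_of_lt (by omega)
    show nuR c ct dt ((m + 1 + 2) * c % n) = dt
    rw [hc', nuR, if_neg (by omega), if_pos le_rfl]
  have hext : ∑ j ∈ Finset.range n, H j
      = ∑ j ∈ Finset.range (m + 1), H j + H (m + 1) := by
    rw [show n = (m + 1) + 1 by omega, Finset.sum_range_succ]
  -- the residues (j+2)*c % n for j < n are a permutation of range n
  have hinj : ∀ i ∈ Finset.range n, ∀ j ∈ Finset.range n,
      (fun j => (j + 2) * c % n) i = (fun j => (j + 2) * c % n) j → i = j := by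
    intro i hi j hj hij
    simp only at hij
    have hi' := Finset.mem_range.mp hi
    have hj' := Finset.mem_range.mp hj
    have h1 : (i + 2) ≡ (j + 2) [MOD n] :=
      Nat.ModEq.cancel_right_of_coprime hcop'.symm hij
    have h2 : (i + 2) % n = (j + 2) % n := h1
    have e1 : (i + 2) % n = if i + 2 < n then i + 2 else i + 2 - n := by
      split_ifs with h
      · exact Nat.mod_eq_of_lt h
      · rw [Nat.mod_eq_sub_mod (by omega)]; exact Nat.mod_eq_of_lt (by omega)
    have e2 : (j + 2) % n = if j + 2 < n then j + 2 else j + 2 - n := by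
      split_ifs with h
      · exact Nat.mod_eq_of_lt h
      · rw [Nat.mod_eq_sub_mod (by omega)]; exact Nat.mod_eq_of_lt (by omega)
    rw [e1, e2] at h2
    split_ifs at h2 <;> omega
  have himg : (Finset.range n).image (fun j => (j + 2) * c % n) = Finset.range n := by
    apply Finset.eq_of_subset_of_card_le
    · intro r hr
      obtain ⟨j, _, hj⟩ := Finset.mem_image.mp hr
      exact Finset.mem_range.mpr (hj ▸ Nat.mod_lt _ (by omega))
    · rw [Finset.card_image_of_injOn fun i hi j hj => hinj i hi j hj]
  have hperm : ∑ j ∈ Finset.range n, H j = ∑ r ∈ Finset.range n, nuR c ct dt r := by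
    conv_rhs => rw [← himg]
    rw [Finset.sum_image hinj]
  -- evaluate the full sum over residues
  have hA : ∑ r ∈ Finset.range (c + 1), nuR c ct dt r = (c : ℤ) * dt + (ct + dt) := by
    rw [Finset.sum_range_succ']
    have h1 : ∑ i ∈ Finset.range c, nuR c ct dt (i + 1) = (c : ℤ) * dt := by
      rw [Finset.sum_congr rfl (fun i hi => by
          have := Finset.mem_range.mp hi
          show nuR c ct dt (i + 1) = dt
          rw [nuR, if_neg (by omega), if_pos (by omega)]),
        Finset.sum_const, Finset.card_range, nsmul_eq_mul]
    have h2 : nuR c ct dt 0 = ct + dt := by simp [nuR]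
    rw [h1, h2]
  have hB : ∑ r ∈ Finset.Ico (c + 1) n, nuR c ct dt r = ((d : ℤ) - 1) * ct := by
    rw [Finset.sum_congr rfl (fun r hr => by
        have := Finset.mem_Ico.mp hr
        show nuR c ct dt r = ct
        rw [nuR, if_neg (by omega), if_neg (by omega)]),
      Finset.sum_const, Nat.card_Ico, nsmul_eq_mul]
    have : ((n - (c + 1) : ℕ) : ℤ) = (d : ℤ) - 1 := by omega
    rw [this]
  have hsplit : ∑ r ∈ Finset.range n, nuR c ct dt r
      = ∑ r ∈ Finset.range (c + 1), nuR c ct dt r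
        + ∑ r ∈ Finset.Ico (c + 1) n, nuR c ct dt r := by
    rw [Finset.range_eq_Ico, Finset.range_eq_Ico,
      Finset.sum_Ico_consecutive _ (Nat.zero_le _) (by omega : c + 1 ≤ n)]
  have htotal : ∑ j ∈ Finset.range n, H j
      = (c : ℤ) * dt + (ct + dt) + ((d : ℤ) - 1) * ct := by
    rw [hperm, hsplit, hA, hB]
  rw [hS]
  have : ∑ j ∈ Finset.range (m + 1), H j
      = (c : ℤ) * dt + (ct + dt) + ((d : ℤ) - 1) * ct - dt := by
    rw [← htotal, hext, hHm1]; ring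
  rw [this]; ring

lemma nuP_mul (g : ℕ) (hg : 0 < g) (ct dt : ℤ) (p : ℕ × ℕ) :
    nuP ct dt (g * p.1, g * p.2) = nuP ct dt p := by
  obtain ⟨a, b⟩ := p
  show (if g * a = g * b then ct + dt else if g * b < g * a then dt else ct)
    = (if a = b then ct + dt else if b < a then dt else ct)
  rcases lt_trichotomy a b with h | h | h
  · have h1 : ¬ g * a = g * b := fun hh => absurd (Nat.eq_of_mul_eq_mul_left hg hh) (by omega)
    have h2 : ¬ g * b < g * a := by
      have := mul_lt_mul_of_pos_left h (show (0:ℕ) < g from hg)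
      omega
    rw [if_neg h1, if_neg h2, if_neg (by omega), if_neg (by omega)]
  · rw [if_pos (by rw [h]), if_pos h]
  · have h1 : ¬ g * a = g * b := fun hh => absurd (Nat.eq_of_mul_eq_mul_left hg hh) (by omega)
    have h2 : g * b < g * a := mul_lt_mul_of_pos_left h hg
    rw [if_neg h1, if_pos h2, if_neg (by omega), if_pos h]

lemma cdSeq_mul (g e e' : ℕ) (hg : 0 < g) :
    ∀ k, cdSeq (g * e) (g * e') k = (g * (cdSeq e e' k).1, g * (cdSeq e e' k).2) := by
  have hstep : ∀ p : ℕ × ℕ, phiStep (g * e) (g * e') (g * p.1, g * p.2)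
      = (g * (phiStep e e' p).1, g * (phiStep e e' p).2) := by
    intro ⟨a, b⟩
    rcases lt_trichotomy a b with h | h | h
    · rw [phiStep_lt (mul_lt_mul_of_pos_left h hg),
        phiStep_lt (x := a) (y := b) h]
      simp only [Prod.mk.injEq, and_true, true_and]
      rw [Nat.mul_sub]
    · subst h
      rw [phiStep_eq rfl, phiStep_eq (x := a) (y := a) rfl]
    · rw [phiStep_gt (mul_lt_mul_of_pos_left h hg),
        phiStep_gt (x := a) (y := b) h]
      simp only [Prod.mk.injEq, and_true, true_and]
      rw [Nat.mul_sub]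
  intro k
  induction k with
  | zero => rfl
  | succ k ih =>
    show phiStep (g * e) (g * e') (cdSeq (g * e) (g * e') k) = _
    rw [ih, hstep (cdSeq e e' k)]
    rfl

/-- **Lemma.** With `ν_k = c̃ + d̃`, `d̃`, or `c̃` according as `c_k = d_k`,
`c_k > d_k`, or `c_k < d_k`, one has `∑_{k=2}^{P+1} ν_k = e·d̃ + e'·c̃`. (Since
`cdSeq c d k = (c_{k+1}, d_{k+1})`, the sum below is exactly `∑_{k=2}^{P+1}`.) -/
theorem stmt12 (c d : ℕ) (hc : 0 < c) (hd : 0 < d)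
    (e e' P : ℕ) (he : e = c / Nat.gcd c d) (he' : e' = d / Nat.gcd c d)
    (hP : P = e + e' - 1) (ct dt : ℤ) :
    ∑ k ∈ Finset.range P,
        (if (cdSeq c d (k + 1)).1 = (cdSeq c d (k + 1)).2 then ct + dt
         else if (cdSeq c d (k + 1)).2 < (cdSeq c d (k + 1)).1 then dt else ct)
      = (e : ℤ) * dt + (e' : ℤ) * ct := by
  have hg : 0 < Nat.gcd c d := Nat.gcd_pos_of_pos_left d hc
  have hce : c = Nat.gcd c d * e := by
    rw [he]; exact (Nat.mul_div_cancel' (Nat.gcd_dvd_left c d)).symm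
  have hde : d = Nat.gcd c d * e' := by
    rw [he']; exact (Nat.mul_div_cancel' (Nat.gcd_dvd_right c d)).symm
  have hep : 0 < e := by
    rcases Nat.eq_zero_or_pos e with h | h
    · rw [h, Nat.mul_zero] at hce; omega
    · exact h
  have hep' : 0 < e' := by
    rcases Nat.eq_zero_or_pos e' with h | h
    · rw [h, Nat.mul_zero] at hde; omega
    · exact h
  have hcop : Nat.Coprime e e' := by
    rw [he, he']; exact Nat.coprime_div_gcd_div_gcd hg
  have hseq : ∀ k, cdSeq c d k
      = (Nat.gcd c d * (cdSeq e e' k).1, Nat.gcd c d * (cdSeq e e' k).2) := by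
    intro k
    have h := cdSeq_mul (Nat.gcd c d) e e' hg k
    rwa [← hce, ← hde] at h
  have key : ∀ k : ℕ, nuP ct dt (cdSeq c d (k + 1)) = nuP ct dt (cdSeq e e' (k + 1)) := by
    intro k
    rw [hseq (k + 1)]
    exact nuP_mul (Nat.gcd c d) hg ct dt (cdSeq e e' (k + 1))
  show ∑ k ∈ Finset.range P, nuP ct dt (cdSeq c d (k + 1)) = (e : ℤ) * dt + (e' : ℤ) * ct
  rw [Finset.sum_congr rfl fun k _ => key k, hP]
  exact core e e' hep hep' hcop ct dt

end IgusaTS
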